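/- Let n ≥ 1 be an integer. If f ∈ A_n satisfies |z·f''(z)| < (n+1)/2 for all z ∈ 𝔻, then f ∈ Ω_n. -/

import Mathlib

open Complex Metric

/-- The open unit disc in `ℂ`. -/
def unitDisc : Set ℂ := Metric.ball 0 1

/-- `f ∈ 𝒜ₙ`: `f` is analytic on the unit disc with power series
`f(z) = z + ∑_{k=n+1}^∞ a_k z^k`. -/
def MemA (n : ℕ) (f : ℂ → ℂ) : Prop :=
  DifferentiableOn ℂ f unitDisc ∧
    ∃ a : ℕ → ℂ, ∀ z ∈ unitDisc, f z = z + ∑' k : ℕ, a k * z ^ (n + 1 + k)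

/-- `f ∈ Ωₙ`: `f ∈ 𝒜ₙ` and `|z f'(z) - f(z)| < 1/2` on the unit disc. -/
def MemOmega (n : ℕ) (f : ℂ → ℂ) : Prop :=
  MemA n f ∧ ∀ z ∈ unitDisc, ‖z * deriv f z - f z‖ < 1 / 2


open Filter Set Topology Function

lemma maxp {v : ℂ → ℂ} {n : ℕ} {B : ℝ}
    (hv : DifferentiableOn ℂ v (ball (0:ℂ) 1))
    (hbound : ∀ z ∈ ball (0:ℂ) 1, ‖z‖ ^ n * ‖v z‖ ≤ B) :
    ∀ z ∈ ball (0:ℂ) 1, ‖v z‖ ≤ B := by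
  intro ζ hζ
  rw [mem_ball_zero_iff] at hζ
  have hlim : Tendsto (fun r : ℝ => B / r ^ n) (𝓝[<] (1:ℝ)) (𝓝 B) := by
    have : Tendsto (fun r : ℝ => B / r ^ n) (𝓝 (1:ℝ)) (𝓝 (B / 1 ^ n)) := by
      apply Tendsto.div tendsto_const_nhds (tendsto_id.pow n)
      norm_num
    simpa using this.mono_left nhdsWithin_le_nhds
  refine ge_of_tendsto hlim ?_
  filter_upwards [Ioo_mem_nhdsLT hζ] with r hr
  obtain ⟨hr1, hr2⟩ := hr
  have hr0 : 0 < r := lt_of_le_of_lt (norm_nonneg ζ) hr1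
  have hsub : closure (ball (0:ℂ) r) ⊆ ball (0:ℂ) 1 := by
    rw [closure_ball (0:ℂ) hr0.ne']
    exact closedBall_subset_ball hr2
  have key : ‖v ζ‖ ≤ B / r ^ n := by
    apply Complex.norm_le_of_forall_mem_frontier_norm_le isBounded_ball
      ((hv.mono hsub).diffContOnCl)
    · intro z hz
      rw [frontier_ball (0:ℂ) hr0.ne'] at hz
      have hzn : ‖z‖ = r := by simpa [mem_sphere_iff_norm] using hz
      have hzb : z ∈ ball (0:ℂ) 1 := by
        rw [mem_ball_zero_iff, hzn]; exact hr2
      have := hbound z hzb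
      rw [hzn] at this
      rw [le_div_iff₀ (by positivity)]
      linarith [this]
    · exact subset_closure (mem_ball_zero_iff.2 hr1)
  exact key

lemma ext_u {f : ℂ → ℂ} {m : ℕ} (hm : 0 < m) {ρ M : ℝ}
    (hf : DifferentiableOn ℂ f (ball (0:ℂ) 1))
    (hρ : 0 < ρ) (hρ1 : ρ < 1)
    (hbd : ∀ z ∈ ball (0:ℂ) ρ, ‖f z‖ ≤ M * ‖z‖ ^ m) :
    ∃ u : ℂ → ℂ, DifferentiableOn ℂ u (ball (0:ℂ) 1) ∧
      ∀ z ∈ ball (0:ℂ) 1, f z = z ^ m * u z := by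
  set u₀ : ℂ → ℂ := fun z => f z / z ^ m with hu₀
  have hdiffat : ∀ z : ℂ, z ∈ ball (0:ℂ) 1 → z ≠ 0 → DifferentiableAt ℂ u₀ z := by
    intro z hz h0
    exact (hf.differentiableAt (isOpen_ball.mem_nhds hz)).div
      (differentiableAt_pow m) (pow_ne_zero m h0)
  have hballρ : ball (0:ℂ) ρ ⊆ ball (0:ℂ) 1 := ball_subset_ball hρ1.le
  have hd : DifferentiableOn ℂ u₀ (ball (0:ℂ) ρ \ {0}) := fun z hz =>
    (hdiffat z (hballρ hz.1) (by simpa using hz.2)).differentiableWithinAt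
  have hb : BddAbove (norm ∘ u₀ '' (ball (0:ℂ) ρ \ {0})) := by
    refine ⟨M, ?_⟩
    rintro y ⟨z, ⟨hz1, hz2⟩, rfl⟩
    have h0 : z ≠ 0 := by simpa using hz2
    have hz0 : (0:ℝ) < ‖z‖ := norm_pos_iff.mpr h0
    have hzn : (0:ℝ) < ‖z‖ ^ m := pow_pos hz0 m
    simp only [comp_apply, hu₀, norm_div, norm_pow]
    rw [div_le_iff₀ hzn]
    exact hbd z hz1
  set u : ℂ → ℂ := update u₀ 0 (limUnder (𝓝[≠] (0:ℂ)) u₀) with hu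
  have hu' : DifferentiableOn ℂ u (ball (0:ℂ) ρ) :=
    Complex.differentiableOn_update_limUnder_of_bddAbove (ball_mem_nhds 0 hρ) hd hb
  have hf0 : f 0 = 0 := by
    have := hbd 0 (mem_ball_self hρ)
    simp [zero_pow hm.ne'] at this
    simpa using norm_le_zero_iff.mp (by simpa [zero_pow hm.ne'] using this)
  refine ⟨u, ?_, ?_⟩
  · intro z hz
    by_cases h0 : z = 0
    · subst h0
      exact ((hu' 0 (mem_ball_self hρ)).differentiableAt
        (isOpen_ball.mem_nhds (mem_ball_self hρ))).differentiableWithinAt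
    · have ev : u =ᶠ[𝓝 z] u₀ :=
        (eventually_ne_nhds h0).mono fun w hw => update_of_ne hw _ _
      exact ((hdiffat z hz h0).congr_of_eventuallyEq ev).differentiableWithinAt
  · intro z hz
    by_cases h0 : z = 0
    · subst h0; simp [zero_pow hm.ne', hf0]
    · rw [hu, update_of_ne h0, hu₀]
      rw [eq_comm, mul_comm]
      exact div_mul_cancel₀ _ (pow_ne_zero _ h0)

lemma tsum_bound {a : ℕ → ℂ} {z₀ : ℂ} {n : ℕ} (h0 : z₀ ≠ 0)
    (hs : Summable fun k => a k * z₀ ^ (n + 1 + k)) :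
    ∃ M : ℝ, ∀ z : ℂ, ‖z‖ ≤ ‖z₀‖ / 2 →
      ‖∑' k : ℕ, a k * z ^ (n + 1 + k)‖ ≤ M * ‖z‖ ^ (n + 1) := by
  set s := ‖z₀‖ with hsdef
  have hs0 : (0:ℝ) < s := norm_pos_iff.mpr h0
  obtain ⟨C, hC⟩ := (hs.tendsto_atTop_zero.norm.bddAbove_range :
    BddAbove (Set.range fun k => ‖a k * z₀ ^ (n + 1 + k)‖))
  have hak : ∀ k, ‖a k‖ ≤ C / s ^ (n + 1 + k) := by
    intro k
    rw [le_div_iff₀ (pow_pos hs0 _)]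
    simpa [norm_mul, norm_pow] using hC (mem_range_self k)
  refine ⟨2 * C / s ^ (n + 1), fun z hz => ?_⟩
  set t := ‖z‖ with htdef
  have ht0 : (0:ℝ) ≤ t := norm_nonneg z
  have hts : t / s ≤ 1 / 2 := by
    rw [div_le_div_iff₀ hs0 (by norm_num)]
    linarith
  have hterm : ∀ k : ℕ, ‖a k * z ^ (n + 1 + k)‖ ≤
      (C * t ^ (n + 1) / s ^ (n + 1)) * (1 / 2) ^ k := by
    intro k
    calc ‖a k * z ^ (n + 1 + k)‖ = ‖a k‖ * t ^ (n + 1 + k) := by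
          rw [norm_mul, norm_pow]
      _ ≤ (C / s ^ (n + 1 + k)) * t ^ (n + 1 + k) := by
          exact mul_le_mul_of_nonneg_right (hak k) (by positivity)
      _ = (C * t ^ (n + 1) / s ^ (n + 1)) * (t / s) ^ k := by
          rw [pow_add, pow_add, div_pow]
          field_simp
          ring
      _ ≤ (C * t ^ (n + 1) / s ^ (n + 1)) * (1 / 2) ^ k := by
          have hC0 : 0 ≤ C := le_trans (norm_nonneg _) (hC (mem_range_self 0))
          exact mul_le_mul_of_nonneg_left
            (pow_le_pow_left₀ (by positivity) hts k) (by positivity)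
  have hG : HasSum (fun k : ℕ => (C * t ^ (n + 1) / s ^ (n + 1)) * (1 / 2) ^ k)
      (C * t ^ (n + 1) / s ^ (n + 1) * 2) := by
    have := (hasSum_geometric_of_lt_one (by norm_num : (0:ℝ) ≤ 1/2)
      (by norm_num : (1:ℝ)/2 < 1)).mul_left (C * t ^ (n + 1) / s ^ (n + 1))
    rw [show (C * t ^ (n + 1) / s ^ (n + 1) * 2) = C * t ^ (n + 1) / s ^ (n + 1) * (1 - 1 / 2)⁻¹ by norm_num]
    exact this
  calc ‖∑' k : ℕ, a k * z ^ (n + 1 + k)‖ ≤ C * t ^ (n + 1) / s ^ (n + 1) * 2 :=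
        tsum_of_norm_bounded hG hterm
    _ = 2 * C / s ^ (n + 1) * t ^ (n + 1) := by ring

theorem stmt_1 (n : ℕ) (hn : 1 ≤ n) (f : ℂ → ℂ)
    (hf : MemA n f)
    (h : ∀ z ∈ unitDisc, ‖z * deriv (deriv f) z‖ < ((n : ℝ) + 1) / 2) :
    MemOmega n f := by
  obtain ⟨hfd, a, ha⟩ := hf
  refine ⟨⟨hfd, a, ha⟩, ?_⟩
  rw [show unitDisc = ball (0:ℂ) 1 from rfl] at hfd ha h ⊢
  have h0mem : (0:ℂ) ∈ ball (0:ℂ) 1 := mem_ball_self one_pos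
  have hf0 : f 0 = 0 := by
    rw [ha 0 h0mem]
    simp
  by_cases hS : ∃ z₀ : ℂ, z₀ ≠ 0 ∧ z₀ ∈ ball (0:ℂ) 1 ∧
      Summable fun k => a k * z₀ ^ (n + 1 + k)
  case neg =>
    -- f = id on the disc
    push_neg at hS
    have hid : ∀ z ∈ ball (0:ℂ) 1, f z = z := by
      intro z hz
      by_cases h0 : z = 0
      · rw [h0, hf0]
      · rw [ha z hz, tsum_eq_zero_of_not_summable (hS z h0 hz), add_zero]
    intro z hz
    have hder : deriv f z = 1 := by
      have ev : f =ᶠ[𝓝 z] id := eventuallyEq_of_mem (isOpen_ball.mem_nhds hz) hid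
      rw [ev.deriv_eq, deriv_id]
    rw [hder, hid z hz]
    simp
  case pos =>
  obtain ⟨z₀, h0, hz₀mem, hsum⟩ := hS
  obtain ⟨M, hM⟩ := tsum_bound h0 hsum
  set ρ : ℝ := ‖z₀‖ / 2 with hρdef
  have hz₀pos : 0 < ‖z₀‖ := norm_pos_iff.mpr h0
  have hρpos : 0 < ρ := by positivity
  have hρ1 : ρ < 1 := by
    have h1 : ‖z₀‖ < 1 := mem_ball_zero_iff.mp hz₀mem
    rw [hρdef]; linarith
  have hFd : DifferentiableOn ℂ (fun z => f z - z) (ball (0:ℂ) 1) :=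
    hfd.sub differentiableOn_id
  have hbd : ∀ z ∈ ball (0:ℂ) ρ, ‖f z - z‖ ≤ M * ‖z‖ ^ (n + 1) := by
    intro z hz
    rw [mem_ball_zero_iff] at hz
    have hz1 : z ∈ ball (0:ℂ) 1 := mem_ball_zero_iff.mpr (hz.trans hρ1)
    have : f z - z = ∑' k : ℕ, a k * z ^ (n + 1 + k) := by
      rw [ha z hz1]; ring
    rw [this]
    exact hM z hz.le
  obtain ⟨u, hu_diff, hu_eq⟩ := ext_u (m := n + 1) (by omega) hFd hρpos hρ1 hbd
  -- analyticity
  have ua : AnalyticOnNhd ℂ u (ball (0:ℂ) 1) := hu_diff.analyticOnNhd isOpen_ball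
  have u'a : AnalyticOnNhd ℂ (deriv u) (ball (0:ℂ) 1) := ua.deriv
  set w : ℂ → ℂ := fun z => (n : ℂ) * u z + z * deriv u z with hwdef
  have hw_diff : DifferentiableOn ℂ w (ball (0:ℂ) 1) := fun z hz =>
    (((ua z hz).differentiableAt.const_mul _).add
      (differentiableAt_id.mul (u'a z hz).differentiableAt)).differentiableWithinAt
  have wa : AnalyticOnNhd ℂ w (ball (0:ℂ) 1) := hw_diff.analyticOnNhd isOpen_ball
  have w'a : AnalyticOnNhd ℂ (deriv w) (ball (0:ℂ) 1) := wa.deriv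
  set v : ℂ → ℂ := fun z => ((n : ℂ) + 1) * w z + z * deriv w z with hvdef
  have hv_diff : DifferentiableOn ℂ v (ball (0:ℂ) 1) := fun z hz =>
    (((wa z hz).differentiableAt.const_mul _).add
      (differentiableAt_id.mul (w'a z hz).differentiableAt)).differentiableWithinAt
  set G : ℂ → ℂ := fun z => z * deriv f z - f z with hGdef
  -- f w = w + w^(n+1) * u w on the ball
  have hfu : ∀ z ∈ ball (0:ℂ) 1, f z = z + z ^ (n + 1) * u z := by
    intro z hz
    have := hu_eq z hz
    linear_combination this
  -- deriv f
  have hdf : ∀ z ∈ ball (0:ℂ) 1,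
      deriv f z = 1 + (((n : ℂ) + 1) * z ^ n * u z + z ^ (n + 1) * deriv u z) := by
    intro z hz
    have ev : f =ᶠ[𝓝 z] fun ζ => ζ + ζ ^ (n + 1) * u ζ :=
      eventuallyEq_of_mem (isOpen_ball.mem_nhds hz) hfu
    have hR : HasDerivAt (fun ζ : ℂ => ζ + ζ ^ (n + 1) * u ζ)
        (1 + ((↑(n + 1) * z ^ (n + 1 - 1)) * u z + z ^ (n + 1) * deriv u z)) z :=
      (hasDerivAt_id z).add ((hasDerivAt_pow (n + 1) z).mul
        ((ua z hz).differentiableAt.hasDerivAt))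
    rw [ev.deriv_eq, hR.deriv]
    push_cast
    ring_nf
  -- G z = z^(n+1) * w z on the ball
  have hGw : ∀ z ∈ ball (0:ℂ) 1, G z = z ^ (n + 1) * w z := by
    intro z hz
    rw [hGdef]
    simp only []
    rw [hdf z hz, hfu z hz, hwdef]
    simp only []
    ring
  -- deriv G z = z * f'' z
  have hG'1 : ∀ z ∈ ball (0:ℂ) 1, HasDerivAt G (z * deriv (deriv f) z) z := by
    intro z hz
    have h1 : HasDerivAt (deriv f) (deriv (deriv f) z) z :=
      ((hfd.analyticOnNhd isOpen_ball).deriv z hz).differentiableAt.hasDerivAt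
    have h2 : HasDerivAt f (deriv f z) z :=
      ((hfd.analyticOnNhd isOpen_ball) z hz).differentiableAt.hasDerivAt
    have h3 := ((hasDerivAt_id z).mul h1).sub h2
    simp only [id_eq, one_mul] at h3
    rw [show z * deriv (deriv f) z = deriv f z + z * deriv (deriv f) z - deriv f z by ring]
    exact h3
  -- deriv G z = z^n * v z
  have hG'2 : ∀ z ∈ ball (0:ℂ) 1, deriv G z = z ^ n * v z := by
    intro z hz
    have ev : G =ᶠ[𝓝 z] fun ζ => ζ ^ (n + 1) * w ζ :=
      eventuallyEq_of_mem (isOpen_ball.mem_nhds hz) hGw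
    have hR : HasDerivAt (fun ζ : ℂ => ζ ^ (n + 1) * w ζ)
        ((↑(n + 1) * z ^ (n + 1 - 1)) * w z + z ^ (n + 1) * deriv w z) z :=
      (hasDerivAt_pow (n + 1) z).mul ((wa z hz).differentiableAt.hasDerivAt)
    rw [ev.deriv_eq, hR.deriv, hvdef]
    simp only []
    push_cast
    ring_nf
  have hid2 : ∀ z ∈ ball (0:ℂ) 1, z * deriv (deriv f) z = z ^ n * v z := by
    intro z hz
    rw [← hG'2 z hz, (hG'1 z hz).deriv]
  -- Schwarz bound on v
  have hvB : ∀ z ∈ ball (0:ℂ) 1, ‖v z‖ ≤ ((n : ℝ) + 1) / 2 := by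
    apply maxp hv_diff
    intro z hz
    have : ‖z‖ ^ n * ‖v z‖ = ‖z ^ n * v z‖ := by rw [norm_mul, norm_pow]
    rw [this, ← hid2 z hz]
    exact (h z hz).le
  -- final: integrate
  intro z hz
  have hzn : ‖z‖ < 1 := mem_ball_zero_iff.mp hz
  have hG0 : G 0 = 0 := by rw [hGdef]; simp [hf0]
  have hseg : ∀ t : ℝ, t ∈ Icc (0:ℝ) 1 → (↑t * z) ∈ ball (0:ℂ) 1 := by
    intro t ht
    rw [mem_ball_zero_iff, norm_mul, Complex.norm_real, Real.norm_eq_abs,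
      _root_.abs_of_nonneg ht.1]
    calc t * ‖z‖ ≤ 1 * ‖z‖ := by
          exact mul_le_mul_of_nonneg_right ht.2 (norm_nonneg z)
      _ < 1 := by rw [one_mul]; exact hzn
  have hGd : DifferentiableOn ℂ G (ball (0:ℂ) 1) := fun ζ hζ =>
    ((differentiableAt_id.mul
        ((hfd.analyticOnNhd isOpen_ball).deriv ζ hζ).differentiableAt).sub
      ((hfd.analyticOnNhd isOpen_ball) ζ hζ).differentiableAt).differentiableWithinAt
  have hGa : AnalyticOnNhd ℂ G (ball (0:ℂ) 1) := hGd.analyticOnNhd isOpen_ball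
  have hder : ∀ t ∈ uIcc (0:ℝ) 1,
      HasDerivAt (fun s : ℝ => G (↑s * z)) (deriv G (↑t * z) * z) t := by
    intro t ht
    rw [uIcc_of_le zero_le_one] at ht
    have hmem := hseg t ht
    have hmul : HasDerivAt (fun s : ℂ => s * z) z (↑t : ℂ) := hasDerivAt_mul_const z
    have hin := HasDerivAt.comp (↑t : ℂ)
      ((hGa _ hmem).differentiableAt.hasDerivAt) hmul
    have hin2 : HasDerivAt (fun s : ℂ => G (s * z)) (deriv G (↑t * z) * z) ↑t := hin
    exact hin2.comp_ofReal
  have hcont : ContinuousOn (fun t : ℝ => deriv G (↑t * z) * z) (Icc (0:ℝ) 1) := by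
    apply ContinuousOn.mul _ continuousOn_const
    exact (hGa.deriv.continuousOn).comp
      ((continuous_ofReal.mul continuous_const).continuousOn) hseg
  have hintg : IntervalIntegrable (fun t : ℝ => deriv G (↑t * z) * z)
      MeasureTheory.volume 0 1 := by
    apply ContinuousOn.intervalIntegrable
    rwa [uIcc_of_le zero_le_one]
  have hFTC : ∫ t in (0:ℝ)..1, deriv G (↑t * z) * z = G z - G 0 := by
    have := intervalIntegral.integral_eq_sub_of_hasDerivAt hder hintg
    rw [this]
    norm_num
  have hnormint : ‖G z‖ ≤ ‖z‖ ^ (n + 1) / 2 := by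
    have hb : ∀ t ∈ Icc (0:ℝ) 1, ‖deriv G (↑t * z) * z‖ ≤
        (((n:ℝ) + 1) / 2 * ‖z‖ ^ (n + 1)) * t ^ n := by
      intro t ht
      have hmem := hseg t ht
      rw [norm_mul, hG'2 _ hmem, norm_mul, norm_pow, norm_mul, Complex.norm_real,
        Real.norm_eq_abs, _root_.abs_of_nonneg ht.1]
      have hv := hvB _ hmem
      calc (t * ‖z‖) ^ n * ‖v (↑t * z)‖ * ‖z‖
          ≤ (t * ‖z‖) ^ n * (((n:ℝ) + 1) / 2) * ‖z‖ := by
            have h1 : (0:ℝ) ≤ (t * ‖z‖) ^ n :=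
              pow_nonneg (mul_nonneg ht.1 (norm_nonneg z)) n
            exact mul_le_mul_of_nonneg_right
              (mul_le_mul_of_nonneg_left hv h1) (norm_nonneg z)
        _ = (((n:ℝ) + 1) / 2 * ‖z‖ ^ (n + 1)) * t ^ n := by
            rw [mul_pow, pow_succ]
            ring
    have hIb : IntervalIntegrable (fun t : ℝ => (((n:ℝ) + 1) / 2 * ‖z‖ ^ (n + 1)) * t ^ n)
        MeasureTheory.volume 0 1 := (continuous_const.mul (continuous_pow n)).intervalIntegrable 0 1
    calc ‖G z‖ = ‖∫ t in (0:ℝ)..1, deriv G (↑t * z) * z‖ := by rw [hFTC, hG0, sub_zero]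
      _ ≤ ∫ t in (0:ℝ)..1, ‖deriv G (↑t * z) * z‖ :=
          intervalIntegral.norm_integral_le_integral_norm zero_le_one
      _ ≤ ∫ t in (0:ℝ)..1, (((n:ℝ) + 1) / 2 * ‖z‖ ^ (n + 1)) * t ^ n := by
          apply intervalIntegral.integral_mono_on zero_le_one _ hIb
          · intro t ht
            exact hb t ht
          · exact hintg.norm
      _ = (((n:ℝ) + 1) / 2 * ‖z‖ ^ (n + 1)) * (1 / ((n:ℝ) + 1)) := by
          rw [intervalIntegral.integral_const_mul, integral_pow]
          norm_num
      _ = ‖z‖ ^ (n + 1) / 2 := by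
          field_simp
  have hlt : ‖z‖ ^ (n + 1) < 1 :=
    pow_lt_one₀ (norm_nonneg z) hzn (Nat.succ_ne_zero n)
  calc ‖z * deriv f z - f z‖ = ‖G z‖ := rfl
    _ ≤ ‖z‖ ^ (n + 1) / 2 := hnormint
    _ < 1 / 2 := by linarith
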